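/- For every integer r ≥ 20, the product ∏_{i=1}^{r-1} (2i−1)! / (2π)^{2i} is greater than (2r−3)!. -/

import Mathlib

open Real

set_option exponentiation.threshold 400

lemma pow40_le_fac (r : ℕ) (hr : 20 ≤ r) : 40 ^ r ≤ Nat.factorial (2 * r - 3) := by
  induction r, hr using Nat.le_induction with
  | base => decide
  | succ r hr ih =>
    have h3 : 2 * (r + 1) - 3 = (2 * r - 3) + 2 := by omega
    rw [h3, pow_succ]
    have h37 : 37 ≤ 2 * r - 3 := by omega
    calc 40 ^ r * 40 ≤ Nat.factorial (2 * r - 3) * 40 := Nat.mul_le_mul_right _ ih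
      _ ≤ Nat.factorial (2 * r - 3) * ((2 * r - 3 + 1) * (2 * r - 3 + 2)) :=
          Nat.mul_le_mul_left _ (by nlinarith)
      _ = Nat.factorial (2 * r - 3 + 2) := by
          rw [Nat.factorial_succ, Nat.factorial_succ]; ring

lemma twopi_sq_le : (2 * π) ^ 2 ≤ (40 : ℝ) := by
  have h := pi_lt_d2
  nlinarith [pi_pos]

lemma twopi_pow_le_fac (r : ℕ) (hr : 20 ≤ r) :
    (2 * π) ^ (2 * r) ≤ (Nat.factorial (2 * r - 3) : ℝ) := by
  have h1 : (2 * π) ^ (2 * r) = ((2 * π) ^ 2) ^ r := by rw [← pow_mul]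
  rw [h1]
  calc ((2 * π) ^ 2) ^ r ≤ (40 : ℝ) ^ r := by
        apply pow_le_pow_left₀ (by positivity) twopi_sq_le
    _ ≤ (Nat.factorial (2 * r - 3) : ℝ) := by
        exact_mod_cast pow40_le_fac r hr

lemma base_case :
    (Nat.factorial 37 : ℝ) <
      ∏ i ∈ Finset.Icc 1 19, (Nat.factorial (2 * i - 1) : ℝ) / (2 * π) ^ (2 * i) := by
  have hpi : (0:ℝ) < 2 * π := by positivity
  have hprod : ∏ i ∈ Finset.Icc 1 19, (Nat.factorial (2 * i - 1) : ℝ) / (2 * π) ^ (2 * i)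
      = (∏ i ∈ Finset.Icc 1 19, (Nat.factorial (2 * i - 1) : ℝ)) / (2 * π) ^ 380 := by
    rw [Finset.prod_div_distrib, Finset.prod_pow_eq_pow_sum]
    norm_num [show (∑ i ∈ Finset.Icc 1 19, 2 * i) = 380 from by decide]
  rw [hprod, lt_div_iff₀ (by positivity)]
  have hN : (∏ i ∈ Finset.Icc 1 19, (Nat.factorial (2 * i - 1) : ℝ))
      = ((∏ i ∈ Finset.Icc 1 19, Nat.factorial (2 * i - 1) : ℕ) : ℝ) := by
    push_cast; ring
  rw [hN, show (∏ i ∈ Finset.Icc 1 19, Nat.factorial (2 * i - 1)) = 370943234880905508470680127234448658355661043130409135135827409085222518397436538397312841638488542032502752924745194378010467429413262749058578936186882196053268032815693460301084636061134827562618945300022531506844061284713292115123229936092908686595161231391036721250819337355264000000000000000000000000000000000000000000000000000000000000000000000000 from by decide]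
  calc (Nat.factorial 37 : ℝ) * (2 * π) ^ 380
      ≤ (Nat.factorial 37 : ℝ) * (63 / 10) ^ 380 := by
        apply mul_le_mul_of_nonneg_left _ (by positivity)
        apply pow_le_pow_left₀ (by positivity)
        nlinarith [pi_lt_d2]
    _ < _ := by
        rw [div_pow, ← mul_div_assoc, div_lt_iff₀ (by positivity)]
        have key : Nat.factorial 37 * 63 ^ 380 <
            370943234880905508470680127234448658355661043130409135135827409085222518397436538397312841638488542032502752924745194378010467429413262749058578936186882196053268032815693460301084636061134827562618945300022531506844061284713292115123229936092908686595161231391036721250819337355264000000000000000000000000000000000000000000000000000000000000000000000000 * 10 ^ 380 := by decide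
        exact_mod_cast key

/-- For every integer `r ≥ 20`, `∏_{i=1}^{r-1} (2i−1)! / (2π)^{2i} > (2r−3)!`. -/
theorem stmt_10 (r : ℕ) (hr : 20 ≤ r) :
    (Nat.factorial (2 * r - 3) : ℝ) <
      ∏ i ∈ Finset.Icc 1 (r - 1),
        (Nat.factorial (2 * i - 1) : ℝ) / (2 * π) ^ (2 * i) := by
  induction r, hr using Nat.le_induction with
  | base => simpa using base_case
  | succ r hr ih =>
    have hr1 : r + 1 - 1 = (r - 1) + 1 := by omega
    rw [hr1, Finset.prod_Icc_succ_top (by omega : 1 ≤ r - 1 + 1)]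
    rw [show r - 1 + 1 = r from by omega]
    have h2 : 2 * (r + 1) - 3 = 2 * r - 1 := by omega
    rw [h2]
    have hfac : (2 * π) ^ (2 * r) ≤ (Nat.factorial (2 * r - 3) : ℝ) := twopi_pow_le_fac r hr
    have hpos : (0:ℝ) < (2 * π) ^ (2 * r) := by positivity
    have hfpos : (0:ℝ) < (Nat.factorial (2 * r - 1) : ℝ) := by
      exact_mod_cast Nat.factorial_pos _
    calc (Nat.factorial (2 * r - 1) : ℝ)
        = (Nat.factorial (2 * r - 1) : ℝ) / (2 * π) ^ (2 * r) * (2 * π) ^ (2 * r) := by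
          field_simp
      _ ≤ (Nat.factorial (2 * r - 1) : ℝ) / (2 * π) ^ (2 * r) * (Nat.factorial (2 * r - 3) : ℝ) := by
          apply mul_le_mul_of_nonneg_left hfac (by positivity)
      _ < (Nat.factorial (2 * r - 1) : ℝ) / (2 * π) ^ (2 * r) *
            ∏ i ∈ Finset.Icc 1 (r - 1), (Nat.factorial (2 * i - 1) : ℝ) / (2 * π) ^ (2 * i) := by
          apply mul_lt_mul_of_pos_left ih (by positivity)
      _ = (∏ i ∈ Finset.Icc 1 (r - 1), (Nat.factorial (2 * i - 1) : ℝ) / (2 * π) ^ (2 * i)) *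
            ((Nat.factorial (2 * r - 1) : ℝ) / (2 * π) ^ (2 * r)) := by ring
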